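/- Let T : I → I be an interval exchange transformation given by permutation π and length vector λ. If M(β) < ∞ for every β ∈ 𝒜 \ {π₀⁻¹(1)}, then every orbit of T is periodic. More precisely, the interval I can be decomposed into a finite number of left-closed right-open intervals such that on each of these intervals some power T^N acts as the identity (the period N being uniform on each such component). -/
import Mathlib


open MeasureTheory Set
open scoped Classical

/-- An interval exchange transformation (IET) on the interval `[a, b)`:
an alphabet `Fin d`, bijections `perm0`, `perm1 : Fin d ≃ Fin d` describing the order of
the exchanged intervals before and after applying the map, and a positive length vector
`len` summing up to `b - a`.  The permutation datum is assumed non-reducible. -/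
structure IET where
  d : ℕ
  hd : 0 < d
  a : ℝ
  b : ℝ
  hab : a < b
  perm0 : Fin d ≃ Fin d
  perm1 : Fin d ≃ Fin d
  len : Fin d → ℝ
  len_pos : ∀ α, 0 < len α
  len_sum : ∑ α, len α = b - a
  irred : ∀ k : ℕ, 0 < k → k < d → ¬ (∀ α, (perm0 α : ℕ) < k ↔ (perm1 α : ℕ) < k)

namespace IET

variable (T : IET)

/-- The left endpoint `∂I_α` of the exchanged interval `I_α`. -/
noncomputable def lep (α : Fin T.d) : ℝ :=
  T.a + ∑ β ∈ Finset.univ.filter (fun β => T.perm0 β < T.perm0 α), T.len β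

/-- The left endpoint of the image interval `T(I_α)`. -/
noncomputable def lepImg (α : Fin T.d) : ℝ :=
  T.a + ∑ β ∈ Finset.univ.filter (fun β => T.perm1 β < T.perm1 α), T.len β

/-- The translation amount on `I_α`. -/
noncomputable def transl (α : Fin T.d) : ℝ := T.lepImg α - T.lep α

/-- The exchanged interval `I_α`. -/
noncomputable def interval (α : Fin T.d) : Set ℝ :=
  Set.Ico (T.lep α) (T.lep α + T.len α)

/-- The image interval `T(I_α)`. -/
noncomputable def intervalImg (α : Fin T.d) : Set ℝ :=
  Set.Ico (T.lepImg α) (T.lepImg α + T.len α)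

/-- The IET as a self-map of `ℝ`: it translates each `I_α` onto its image and is
the identity outside `[a, b)`. -/
noncomputable def toFun (x : ℝ) : ℝ :=
  x + ∑ α, if x ∈ T.interval α then T.transl α else 0

/-- The inverse IET `T⁻¹` as a self-map of `ℝ`. -/
noncomputable def invFun (x : ℝ) : ℝ :=
  x + ∑ α, if x ∈ T.intervalImg α then -T.transl α else 0

/-- The iterate `T^n`, `n : ℤ` (negative iterates via `invFun`). -/
noncomputable def iter (n : ℤ) (x : ℝ) : ℝ :=
  if 0 ≤ n then T.toFun^[n.toNat] x else T.invFun^[(-n).toNat] x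

/-- `M(β) = min {n ≥ 1 | T^{-n}(∂I_β) = ∂I_α for some α with π₁ α ≠ 1}`, with the
convention `M(π₀⁻¹ 1) = 1`, and `∞` if no such `n` exists. -/
noncomputable def M (β : Fin T.d) : ℕ∞ :=
  if (T.perm0 β : ℕ) = 0 then 1
  else sInf {e : ℕ∞ | ∃ n : ℕ, e = (n : ℕ∞) ∧ 1 ≤ n ∧
    ∃ α : Fin T.d, (T.perm1 α : ℕ) ≠ 0 ∧ T.invFun^[n] (T.lep β) = T.lep α}

/-- `N(β) = min {n ≥ 1 | T^{n}(∂I_β) = ∂I_α for some α with π₀ α ≠ 1}`, with the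
convention `N(π₁⁻¹ 1) = 1`, and `∞` if no such `n` exists. -/
noncomputable def N (β : Fin T.d) : ℕ∞ :=
  if (T.perm1 β : ℕ) = 0 then 1
  else sInf {e : ℕ∞ | ∃ n : ℕ, e = (n : ℕ∞) ∧ 1 ≤ n ∧
    ∃ α : Fin T.d, (T.perm0 α : ℕ) ≠ 0 ∧ T.toFun^[n] (T.lep β) = T.lep α}

/-- `s` is a (non-trivial) connection of `T`: the orbit segment
`{T^{-k}(∂I_β) | 0 ≤ k ≤ n}` where `π₀ β ≠ 1`, `π₁ α ≠ 1`, `n ≥ 1` and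
`T^{-n}(∂I_β) = ∂I_α`. -/
def IsConnection (s : Set ℝ) : Prop :=
  ∃ (β α : Fin T.d) (n : ℕ), (T.perm0 β : ℕ) ≠ 0 ∧ (T.perm1 α : ℕ) ≠ 0 ∧ 1 ≤ n ∧
    T.invFun^[n] (T.lep β) = T.lep α ∧
    s = (fun k : ℕ => T.invFun^[k] (T.lep β)) '' {k : ℕ | k ≤ n}

/-- `T` is symmetric: `π₁ ∘ π₀⁻¹ (i) = d + 1 - i` (here with `Fin d` indexing:
`perm1 α + perm0 α + 1 = d`). -/
def IsSymm : Prop := ∀ α, (T.perm1 α : ℕ) + (T.perm0 α : ℕ) + 1 = T.d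

/-- The midpoint `c_α` of the exchanged interval `I_α`. -/
noncomputable def center (α : Fin T.d) : ℝ := T.lep α + T.len α / 2

/-- The midpoint `c_{1/2}` of the interval `I = [a, b)`. -/
noncomputable def centerHalf : ℝ := (T.a + T.b) / 2

/-- Midpoints indexed by `𝒜 ∪ {1/2}`; `none` plays the role of `1/2`. -/
noncomputable def centerOpt (β : Option (Fin T.d)) : ℝ :=
  match β with
  | none => T.centerHalf
  | some α => T.center α

/-- `δ_{1/2}`. -/
def deltaHalf (β : Option (Fin T.d)) : ℕ :=
  match β with
  | none => 1
  | some _ => 0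

/-- The symmetric reflection `𝓘_I (x) = a + b - x` of `I = [a, b)`. -/
noncomputable def refl (x : ℝ) : ℝ := T.a + T.b - x

/-- The first return time `r_J(x) = min {n ≥ 1 | T^n x ∈ J}`. -/
noncomputable def returnTime (J : Set ℝ) (x : ℝ) : ℕ :=
  sInf {n : ℕ | 1 ≤ n ∧ T.toFun^[n] x ∈ J}

/-- The first return map `T_J`. -/
noncomputable def firstReturn (J : Set ℝ) (x : ℝ) : ℝ := T.toFun^[T.returnTime J x] x

/-- The first backward return time `b_J(x) = min {n ≥ 1 | T^{-n} x ∈ J}`. -/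
noncomputable def backTime (J : Set ℝ) (x : ℝ) : ℕ :=
  sInf {n : ℕ | 1 ≤ n ∧ T.invFun^[n] x ∈ J}

/-- The first backward return map `p_J` (the inverse of the first return map `T_J`). -/
noncomputable def backReturn (J : Set ℝ) (x : ℝ) : ℝ := T.invFun^[T.backTime J x] x

/-- `m_{J,α} = inf {n ≥ 0 | T^{-n}(∂I_α) ∈ interior J}`. -/
noncomputable def mJ (J : Set ℝ) (α : Fin T.d) : ℕ :=
  sInf {n : ℕ | T.invFun^[n] (T.lep α) ∈ interior J}

/-- `J` is of form (★): a subinterval `[a_J, b_J) ⊆ I` whose endpoints are iterates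
`T^{m₀}(∂I_{α_J})`, `T^{n₀}(∂I_{β_J})` of left endpoints which do not visit `J` at any
earlier time between `0` and `m₀` (resp. `n₀`). -/
def IsStarForm (J : Set ℝ) : Prop :=
  ∃ (aJ bJ : ℝ) (αJ βJ : Fin T.d) (m₀ n₀ : ℤ),
    aJ < bJ ∧ J = Set.Ico aJ bJ ∧ J ⊆ Set.Ico T.a T.b ∧
    aJ = T.iter m₀ (T.lep αJ) ∧ bJ = T.iter n₀ (T.lep βJ) ∧
    (∀ m : ℤ, (0 ≤ m ∧ m ≤ m₀ ∨ m₀ ≤ m ∧ m ≤ 0) → m ≠ m₀ → T.iter m (T.lep αJ) ∉ J) ∧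
    (∀ n : ℤ, (0 ≤ n ∧ n ≤ n₀ ∨ n₀ ≤ n ∧ n ≤ 0) → n ≠ n₀ → T.iter n (T.lep βJ) ∉ J)

/-- `J` is a `β`-symmetric interval (`β : Option (Fin T.d)`, `none` = `1/2`-symmetric):
`J = [c_β - Δ, c_β + Δ)` with `Δ > 0`, contained in `I_β` (resp. in `I`). -/
def IsSymmetricInterval (J : Set ℝ) (β : Option (Fin T.d)) : Prop :=
  ∃ Δ : ℝ, 0 < Δ ∧ J = Set.Ico (T.centerOpt β - Δ) (T.centerOpt β + Δ) ∧
    (match β with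
      | some γ => J ⊆ T.interval γ
      | none => J ⊆ Set.Ico T.a T.b)

/-- `x` is a left endpoint of one of the intervals exchanged by the first return map
`T_J`, where `J = [aJ, bJ)`: either `x = aJ`, or the forward orbit of `x` before its
first return to `J` meets a left endpoint `∂I_α` of `T` or the right endpoint `bJ`. -/
def IsExchLeftEndpoint (J : Set ℝ) (aJ bJ : ℝ) (x : ℝ) : Prop :=
  x = aJ ∨ ∃ k : ℕ, k < T.returnTime J x ∧
    ((∃ α : Fin T.d, T.toFun^[k] x = T.lep α) ∨ (1 ≤ k ∧ T.toFun^[k] x = bJ))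

/-- A Rokhlin tower decomposition of `I = [a, b)` over `J = [aJ, bJ)` associated with the
first return map `T_J`: the bases `[base γ, base γ + blen γ)` partition `J`, the return
time on the base `γ` is constantly `h γ`, each `T^i` (`i ≤ h γ`) acts as a translation on
the base `γ`, and the tower levels `T^i([base γ, base γ + blen γ))`, `i < h γ`, are
pairwise disjoint and partition `I`. -/
def IsTowerDecomp (aJ bJ : ℝ) {k : ℕ} (base blen : Fin k → ℝ) (h : Fin k → ℕ) : Prop :=
  (∀ γ, 0 < blen γ) ∧ (∀ γ, 1 ≤ h γ) ∧
  Pairwise (Function.onFun Disjoint fun γ => Set.Ico (base γ) (base γ + blen γ)) ∧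
  (⋃ γ, Set.Ico (base γ) (base γ + blen γ)) = Set.Ico aJ bJ ∧
  (∀ γ, ∀ i ≤ h γ, ∀ x ∈ Set.Ico (base γ) (base γ + blen γ),
    T.toFun^[i] x - T.toFun^[i] (base γ) = x - base γ) ∧
  (∀ γ, ∀ x ∈ Set.Ico (base γ) (base γ + blen γ), T.returnTime (Set.Ico aJ bJ) x = h γ) ∧
  (⋃ γ, ⋃ i ∈ Finset.range (h γ), T.toFun^[i] '' Set.Ico (base γ) (base γ + blen γ))
    = Set.Ico T.a T.b ∧
  (∀ γ γ' : Fin k, ∀ i i' : ℕ, i < h γ → i' < h γ' → (γ, i) ≠ (γ', i') →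
    Disjoint (T.toFun^[i] '' Set.Ico (base γ) (base γ + blen γ))
      (T.toFun^[i'] '' Set.Ico (base γ') (base γ' + blen γ')))

/-- Replace the length data of an IET, keeping the combinatorial data. -/
noncomputable abbrev replaceLen (len' : Fin T.d → ℝ) (h1 : ∀ α, 0 < len' α)
    (h2 : ∑ α, len' α = T.b - T.a) : IET :=
  { T with len := len', len_pos := h1, len_sum := h2 }

end IET

open IET

namespace IET

variable (T : IET)

/-- Generalized left endpoint with respect to an arbitrary permutation. -/
noncomputable def glep (p : Fin T.d ≃ Fin T.d) (α : Fin T.d) : ℝ :=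
  T.a + ∑ β ∈ Finset.univ.filter (fun β => p β < p α), T.len β

lemma lep_eq_glep (α : Fin T.d) : T.lep α = T.glep T.perm0 α := rfl

lemma lepImg_eq_glep (α : Fin T.d) : T.lepImg α = T.glep T.perm1 α := rfl

lemma glep_add_len (p : Fin T.d ≃ Fin T.d) (α : Fin T.d) :
    T.glep p α + T.len α =
      T.a + ∑ β ∈ Finset.univ.filter (fun β => p β ≤ p α), T.len β := by
  have hfil : Finset.univ.filter (fun β => p β ≤ p α)
      = insert α (Finset.univ.filter (fun β => p β < p α)) := by
    ext β
    simp only [Finset.mem_filter, Finset.mem_insert, Finset.mem_univ, true_and]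
    constructor
    · intro h
      rcases eq_or_lt_of_le h with h' | h'
      · exact Or.inl (p.injective h')
      · exact Or.inr h'
    · rintro (rfl | h)
      · exact le_rfl
      · exact le_of_lt h
  rw [hfil, Finset.sum_insert (by simp)]
  unfold glep
  ring

lemma a_le_glep (p : Fin T.d ≃ Fin T.d) (α : Fin T.d) : T.a ≤ T.glep p α := by
  have h : (0:ℝ) ≤ ∑ β ∈ Finset.univ.filter (fun β => p β < p α), T.len β :=
    Finset.sum_nonneg fun β _ => (T.len_pos β).le
  unfold glep
  linarith

lemma glep_add_len_le_b (p : Fin T.d ≃ Fin T.d) (α : Fin T.d) :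
    T.glep p α + T.len α ≤ T.b := by
  rw [T.glep_add_len]
  have h1 : ∑ β ∈ Finset.univ.filter (fun β => p β ≤ p α), T.len β ≤ ∑ β, T.len β :=
    Finset.sum_le_sum_of_subset_of_nonneg (Finset.filter_subset _ _)
      (fun β _ _ => (T.len_pos β).le)
  rw [T.len_sum] at h1
  linarith

lemma glep_lt_of_lt (p : Fin T.d ≃ Fin T.d) {α α' : Fin T.d} (h : p α < p α') :
    T.glep p α + T.len α ≤ T.glep p α' := by
  rw [T.glep_add_len]
  unfold glep
  have hsub : Finset.univ.filter (fun β => p β ≤ p α)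
      ⊆ Finset.univ.filter (fun β => p β < p α') := by
    intro β hβ
    simp only [Finset.mem_filter, Finset.mem_univ, true_and] at hβ ⊢
    exact lt_of_le_of_lt hβ h
  have := Finset.sum_le_sum_of_subset_of_nonneg hsub
      (fun β _ _ => (T.len_pos β).le)
  linarith

lemma glep_bot (p : Fin T.d ≃ Fin T.d) : T.glep p (p.symm ⟨0, T.hd⟩) = T.a := by
  unfold glep
  have h : Finset.univ.filter (fun β => p β < p (p.symm ⟨0, T.hd⟩)) = ∅ := by
    ext β
    simp only [Finset.mem_filter, Finset.mem_univ, true_and, Finset.notMem_empty,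
      iff_false, Equiv.apply_symm_apply]
    rw [Fin.lt_def]
    simp
  rw [h]
  simp

lemma glep_succ (p : Fin T.d ≃ Fin T.d) (α : Fin T.d) (h : (p α : ℕ) + 1 < T.d) :
    T.glep p (p.symm ⟨(p α : ℕ) + 1, h⟩) = T.glep p α + T.len α := by
  rw [T.glep_add_len]
  unfold glep
  congr 2
  ext β
  simp only [Finset.mem_filter, Finset.mem_univ, true_and, Equiv.apply_symm_apply]
  rw [Fin.lt_def, Fin.le_def]
  simp [Nat.lt_succ_iff]

lemma glep_top (p : Fin T.d ≃ Fin T.d) (α : Fin T.d) (h : (p α : ℕ) + 1 = T.d) :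
    T.glep p α + T.len α = T.b := by
  rw [T.glep_add_len]
  have hfil : Finset.univ.filter (fun β => p β ≤ p α) = Finset.univ := by
    ext β
    simp only [Finset.mem_filter, Finset.mem_univ, true_and, iff_true]
    rw [Fin.le_def]
    have := (p β).isLt
    omega
  rw [hfil, T.len_sum]
  ring

lemma glep_cover (p : Fin T.d ≃ Fin T.d) {x : ℝ} (hx : x ∈ Set.Ico T.a T.b) :
    ∃ α, x ∈ Set.Ico (T.glep p α) (T.glep p α + T.len α) := by
  classical
  set s : Finset (Fin T.d) := Finset.univ.filter (fun α => T.glep p α ≤ x) with hs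
  have hsne : s.Nonempty := ⟨p.symm ⟨0, T.hd⟩, by simp [hs, T.glep_bot p, hx.1]⟩
  obtain ⟨α, hαs, hmax⟩ := s.exists_max_image (fun α => (p α : ℕ)) hsne
  have hαx : T.glep p α ≤ x := by
    simp only [hs, Finset.mem_filter] at hαs
    exact hαs.2
  refine ⟨α, hαx, ?_⟩
  by_contra hcon
  push_neg at hcon
  by_cases h : (p α : ℕ) + 1 < T.d
  · have h' : T.glep p (p.symm ⟨(p α : ℕ) + 1, h⟩) ≤ x := by
      rw [T.glep_succ p α h]; exact hcon
    have hmem : p.symm ⟨(p α : ℕ) + 1, h⟩ ∈ s := by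
      simp [hs, h']
    have := hmax _ hmem
    simp only [Equiv.apply_symm_apply] at this
    omega
  · have hd : (p α : ℕ) + 1 = T.d := by
      have := (p α).isLt
      omega
    have := T.glep_top p α hd
    have := hx.2
    linarith

lemma glep_unique (p : Fin T.d ≃ Fin T.d) {x : ℝ} {α α' : Fin T.d}
    (h : x ∈ Set.Ico (T.glep p α) (T.glep p α + T.len α))
    (h' : x ∈ Set.Ico (T.glep p α') (T.glep p α' + T.len α')) : α = α' := by
  by_contra hne
  rcases lt_trichotomy (p α) (p α') with hlt | heq | hlt
  · have := T.glep_lt_of_lt p hlt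
    have := h.2
    have := h'.1
    linarith
  · exact hne (p.injective heq)
  · have := T.glep_lt_of_lt p hlt
    have := h'.2
    have := h.1
    linarith

lemma mem_interval_iff {x : ℝ} {α : Fin T.d} :
    x ∈ T.interval α ↔ T.lep α ≤ x ∧ x < T.lep α + T.len α := Set.mem_Ico

lemma mem_intervalImg_iff {x : ℝ} {α : Fin T.d} :
    x ∈ T.intervalImg α ↔ T.lepImg α ≤ x ∧ x < T.lepImg α + T.len α := Set.mem_Ico

lemma toFun_of_mem {x : ℝ} {α : Fin T.d} (h : x ∈ T.interval α) :
    T.toFun x = x + T.transl α := by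
  unfold toFun
  congr 1
  rw [Finset.sum_eq_single α]
  · rw [if_pos h]
  · intro γ _ hγ
    rw [if_neg]
    intro hγx
    exact hγ (T.glep_unique T.perm0 hγx h)
  · intro h'
    exact absurd (Finset.mem_univ α) h'

lemma invFun_of_mem {x : ℝ} {α : Fin T.d} (h : x ∈ T.intervalImg α) :
    T.invFun x = x - T.transl α := by
  unfold invFun
  rw [Finset.sum_eq_single α]
  · rw [if_pos h]; ring
  · intro γ _ hγ
    rw [if_neg]
    intro hγx
    exact hγ (T.glep_unique T.perm1 hγx h)
  · intro h'
    exact absurd (Finset.mem_univ α) h'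

lemma toFun_mem_img {x : ℝ} {α : Fin T.d} (h : x ∈ T.interval α) :
    T.toFun x ∈ T.intervalImg α := by
  rw [T.toFun_of_mem h]
  rw [T.mem_interval_iff] at h
  rw [T.mem_intervalImg_iff]
  unfold transl
  constructor <;> [linarith [h.1]; linarith [h.2]]

lemma invFun_mem_int {x : ℝ} {α : Fin T.d} (h : x ∈ T.intervalImg α) :
    T.invFun x ∈ T.interval α := by
  rw [T.invFun_of_mem h]
  rw [T.mem_intervalImg_iff] at h
  rw [T.mem_interval_iff]
  unfold transl
  constructor <;> [linarith [h.1]; linarith [h.2]]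

lemma interval_subset (α : Fin T.d) : T.interval α ⊆ Set.Ico T.a T.b := by
  intro x hx
  exact ⟨le_trans (T.a_le_glep T.perm0 α) hx.1,
    lt_of_lt_of_le hx.2 (T.glep_add_len_le_b T.perm0 α)⟩

lemma intervalImg_subset (α : Fin T.d) : T.intervalImg α ⊆ Set.Ico T.a T.b := by
  intro x hx
  exact ⟨le_trans (T.a_le_glep T.perm1 α) hx.1,
    lt_of_lt_of_le hx.2 (T.glep_add_len_le_b T.perm1 α)⟩

lemma lep_mem_Iab (α : Fin T.d) : T.lep α ∈ Set.Ico T.a T.b :=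
  T.interval_subset α (T.mem_interval_iff.mpr ⟨le_rfl, by linarith [T.len_pos α]⟩)

lemma toFun_maps {x : ℝ} (hx : x ∈ Set.Ico T.a T.b) : T.toFun x ∈ Set.Ico T.a T.b := by
  obtain ⟨α, hα⟩ := T.glep_cover T.perm0 hx
  exact T.intervalImg_subset α (T.toFun_mem_img hα)

lemma invFun_maps {x : ℝ} (hx : x ∈ Set.Ico T.a T.b) : T.invFun x ∈ Set.Ico T.a T.b := by
  obtain ⟨α, hα⟩ := T.glep_cover T.perm1 hx
  exact T.interval_subset α (T.invFun_mem_int hα)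

lemma invFun_toFun {x : ℝ} (hx : x ∈ Set.Ico T.a T.b) : T.invFun (T.toFun x) = x := by
  obtain ⟨α, hα⟩ := T.glep_cover T.perm0 hx
  have him := T.toFun_mem_img hα
  rw [T.invFun_of_mem him, T.toFun_of_mem hα]
  ring

lemma toFun_invFun {x : ℝ} (hx : x ∈ Set.Ico T.a T.b) : T.toFun (T.invFun x) = x := by
  obtain ⟨α, hα⟩ := T.glep_cover T.perm1 hx
  have him := T.invFun_mem_int hα
  rw [T.toFun_of_mem him, T.invFun_of_mem hα]
  ring

lemma iter_toFun_maps (k : ℕ) {x : ℝ} (hx : x ∈ Set.Ico T.a T.b) :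
    T.toFun^[k] x ∈ Set.Ico T.a T.b := by
  induction k with
  | zero => simpa
  | succ k ih => rw [Function.iterate_succ_apply']; exact T.toFun_maps ih

lemma iter_invFun_maps (k : ℕ) {x : ℝ} (hx : x ∈ Set.Ico T.a T.b) :
    T.invFun^[k] x ∈ Set.Ico T.a T.b := by
  induction k with
  | zero => simpa
  | succ k ih => rw [Function.iterate_succ_apply']; exact T.invFun_maps ih

lemma invFun_iter_toFun (k : ℕ) {x : ℝ} (hx : x ∈ Set.Ico T.a T.b) :
    T.invFun^[k] (T.toFun^[k] x) = x := by
  induction k with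
  | zero => rfl
  | succ k ih =>
    rw [show T.toFun^[k+1] x = T.toFun (T.toFun^[k] x) from
        Function.iterate_succ_apply' _ _ _,
      show ∀ z, T.invFun^[k+1] z = T.invFun^[k] (T.invFun z) from
        fun z => Function.iterate_succ_apply _ _ _,
      T.invFun_toFun (T.iter_toFun_maps k hx)]
    exact ih

lemma toFun_iter_invFun (k : ℕ) {x : ℝ} (hx : x ∈ Set.Ico T.a T.b) :
    T.toFun^[k] (T.invFun^[k] x) = x := by
  induction k with
  | zero => rfl
  | succ k ih =>
    rw [show T.invFun^[k+1] x = T.invFun (T.invFun^[k] x) from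
        Function.iterate_succ_apply' _ _ _,
      show ∀ z, T.toFun^[k+1] z = T.toFun^[k] (T.toFun z) from
        fun z => Function.iterate_succ_apply _ _ _,
      T.toFun_invFun (T.iter_invFun_maps k hx)]
    exact ih

lemma exists_lep_next {α : Fin T.d} (h : T.lep α + T.len α < T.b) :
    ∃ α', T.lep α' = T.lep α + T.len α := by
  by_cases hd : (T.perm0 α : ℕ) + 1 < T.d
  · exact ⟨T.perm0.symm ⟨(T.perm0 α : ℕ) + 1, hd⟩, T.glep_succ T.perm0 α hd⟩
  · exfalso
    have hd' : (T.perm0 α : ℕ) + 1 = T.d := by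
      have := (T.perm0 α).isLt
      omega
    have := T.glep_top T.perm0 α hd'
    rw [← T.lep_eq_glep] at this
    linarith

lemma exists_back_hit (hM : ∀ β : Fin T.d, (T.perm0 β : ℕ) ≠ 0 → T.M β ≠ ⊤)
    (β : Fin T.d) :
    ∃ n : ℕ, 1 ≤ n ∧ ∃ α, T.invFun^[n] (T.lep β) = T.lep α := by
  by_cases h0 : (T.perm0 β : ℕ) = 0
  · have hβ : β = T.perm0.symm ⟨0, T.hd⟩ := by
      have h1 : T.perm0 β = ⟨0, T.hd⟩ := Fin.ext h0
      rw [← h1, Equiv.symm_apply_apply]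
    have hlepβ : T.lep β = T.a := by rw [hβ]; exact T.glep_bot T.perm0
    have hImg : T.lepImg (T.perm1.symm ⟨0, T.hd⟩) = T.a := T.glep_bot T.perm1
    have ha : T.a ∈ T.intervalImg (T.perm1.symm ⟨0, T.hd⟩) := by
      rw [T.mem_intervalImg_iff, hImg]
      exact ⟨le_rfl, by linarith [T.len_pos (T.perm1.symm ⟨0, T.hd⟩)]⟩
    refine ⟨1, le_rfl, T.perm1.symm ⟨0, T.hd⟩, ?_⟩
    rw [hlepβ, Function.iterate_one, T.invFun_of_mem ha]
    unfold transl
    rw [hImg]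
    ring
  · have hMβ := hM β h0
    unfold M at hMβ
    rw [if_neg h0] at hMβ
    have hne : {e : ℕ∞ | ∃ n : ℕ, e = (n : ℕ∞) ∧ 1 ≤ n ∧
        ∃ α : Fin T.d, (T.perm1 α : ℕ) ≠ 0 ∧ T.invFun^[n] (T.lep β) = T.lep α}.Nonempty := by
      by_contra h
      rw [Set.not_nonempty_iff_eq_empty] at h
      rw [h, sInf_empty] at hMβ
      exact hMβ rfl
    obtain ⟨e, n, _, hn1, α, _, heq⟩ := hne
    exact ⟨n, hn1, α, heq⟩

lemma exists_lep_period (hM : ∀ β : Fin T.d, (T.perm0 β : ℕ) ≠ 0 → T.M β ≠ ⊤)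
    (β : Fin T.d) :
    ∃ p : ℕ, 1 ≤ p ∧ T.toFun^[p] (T.lep β) = T.lep β := by
  choose m hm1 f hf using T.exists_back_hit hM
  set t : ℕ → ℕ := fun k => ∑ i ∈ Finset.range k, m (f^[i] β) with ht
  have htrack : ∀ k, T.invFun^[t k] (T.lep β) = T.lep (f^[k] β) := by
    intro k
    induction k with
    | zero => simp [ht]
    | succ k ih =>
      have hsum : t (k+1) = m (f^[k] β) + t k := by
        simp only [ht, Finset.sum_range_succ]
        ring
      rw [hsum, Function.iterate_add_apply, ih, hf, Function.iterate_succ_apply']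
  have hst : StrictMono t := by
    apply strictMono_nat_of_lt_succ
    intro k
    have : t (k+1) = t k + m (f^[k] β) := by
      simp only [ht, Finset.sum_range_succ]
    rw [this]
    have := hm1 (f^[k] β)
    omega
  have main2 : ∀ i j : ℕ, i < j → f^[i] β = f^[j] β →
      ∃ p : ℕ, 1 ≤ p ∧ T.toFun^[p] (T.lep β) = T.lep β := by
    intro i j hij hfe
    set γ := f^[i] β with hγ
    have h1 : T.invFun^[t i] (T.lep β) = T.lep γ := htrack i
    have h2 : T.invFun^[t j] (T.lep β) = T.lep γ := by
      rw [htrack j, ← hfe]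
    set q := t j - t i with hq
    have hq1 : 1 ≤ q := by
      have := hst hij
      omega
    have hqt : q + t i = t j := by
      have := hst hij
      omega
    have h3 : T.invFun^[q] (T.lep γ) = T.lep γ := by
      have h6 : T.invFun^[q + t i] (T.lep β) = T.lep γ := by rw [hqt]; exact h2
      rw [Function.iterate_add_apply, h1] at h6
      exact h6
    have h4 : T.toFun^[q] (T.lep γ) = T.lep γ := by
      conv_lhs => rw [← h3]
      exact T.toFun_iter_invFun q (T.lep_mem_Iab γ)
    have h5 : T.lep β = T.toFun^[t i] (T.lep γ) := by
      rw [← h1]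
      exact (T.toFun_iter_invFun (t i) (T.lep_mem_Iab β)).symm
    refine ⟨q, hq1, ?_⟩
    rw [h5, ← Function.iterate_add_apply, add_comm q (t i),
      Function.iterate_add_apply, h4]
  have hnotinj : ¬ Function.Injective (fun i : Fin (T.d + 1) => f^[(i : ℕ)] β) := by
    intro hinj
    have := Fintype.card_le_of_injective _ hinj
    simp at this
  obtain ⟨i, j, hval, hne⟩ := Function.not_injective_iff.mp hnotinj
  rcases hne.lt_or_gt with hij | hij
  · exact main2 i j hij hval
  · exact main2 j i hij hval.symm

end IET

/-- if `M(β) < ∞` for every `β ≠ π₀⁻¹(1)`, then every orbit of `T` is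
periodic; more precisely `I` decomposes into finitely many left-closed right-open
intervals on each of which some power of `T` is the identity. -/
theorem stmt3 (T : IET)
    (hM : ∀ β : Fin T.d, (T.perm0 β : ℕ) ≠ 0 → T.M β ≠ ⊤) :
    (∀ x ∈ Set.Ico T.a T.b, ∃ N : ℕ, 1 ≤ N ∧ T.toFun^[N] x = x) ∧
    ∃ (k : ℕ) (u v : Fin k → ℝ) (N : Fin k → ℕ),
      (∀ j, u j < v j) ∧
      Pairwise (Function.onFun Disjoint fun j => Set.Ico (u j) (v j)) ∧
      (⋃ j, Set.Ico (u j) (v j)) = Set.Ico T.a T.b ∧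
      (∀ j, 1 ≤ N j) ∧
      (∀ j, ∀ x ∈ Set.Ico (u j) (v j), T.toFun^[N j] x = x) := by
  classical
  choose pp hpp1 hpp2 using fun β => T.exists_lep_period hM β
  set P : ℕ := ∏ β, pp β with hP
  have hP1 : 1 ≤ P := Finset.one_le_prod' (fun β _ => hpp1 β)
  have hPfix : ∀ β, T.toFun^[P] (T.lep β) = T.lep β := by
    intro β
    obtain ⟨c, hc⟩ : pp β ∣ P := Finset.dvd_prod_of_mem pp (Finset.mem_univ β)
    rw [hc, Function.iterate_mul]
    exact Function.iterate_fixed (hpp2 β) c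
  set F : Finset ℝ :=
    (Finset.range P ×ˢ (Finset.univ : Finset (Fin T.d))).image
      (fun q => T.toFun^[q.1] (T.lep q.2)) with hF
  have hFmem : ∀ f ∈ F, ∃ k β, k < P ∧ f = T.toFun^[k] (T.lep β) := by
    intro f hf
    simp only [hF, Finset.mem_image, Finset.mem_product, Finset.mem_range,
      Finset.mem_univ, and_true] at hf
    obtain ⟨⟨k, β⟩, hk, hfe⟩ := hf
    exact ⟨k, β, hk, hfe.symm⟩
  have hmemF : ∀ (k : ℕ) (β : Fin T.d), k < P → T.toFun^[k] (T.lep β) ∈ F := by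
    intro k β hk
    simp only [hF, Finset.mem_image, Finset.mem_product, Finset.mem_range,
      Finset.mem_univ, and_true]
    exact ⟨(k, β), hk, rfl⟩
  have hFsub : ∀ f ∈ F, f ∈ Set.Ico T.a T.b := by
    intro f hf
    obtain ⟨k, β, hk, rfl⟩ := hFmem f hf
    exact T.iter_toFun_maps k (T.lep_mem_Iab β)
  have hlepF : ∀ α, T.lep α ∈ F := fun α => hmemF 0 α hP1
  have haF : T.a ∈ F := by
    have h : T.a = T.lep (T.perm0.symm ⟨0, T.hd⟩) := (T.glep_bot T.perm0).symm
    rw [h]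
    exact hlepF _
  have hFfix : ∀ f ∈ F, T.toFun^[P] f = f := by
    intro f hf
    obtain ⟨k, β, hk, rfl⟩ := hFmem f hf
    rw [← Function.iterate_add_apply, add_comm P k, Function.iterate_add_apply,
      hPfix]
  have hFinv : ∀ f ∈ F, T.invFun f ∈ F := by
    intro f hf
    obtain ⟨k, β, hk, rfl⟩ := hFmem f hf
    cases k with
    | zero =>
      have hP' : P - 1 + 1 = P := by omega
      have h1 : T.lep β = T.toFun (T.toFun^[P-1] (T.lep β)) := by
        have h2 := Function.iterate_succ_apply' T.toFun (P-1) (T.lep β)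
        rw [show (P - 1).succ = P from hP'] at h2
        rw [← h2, hPfix β]
      simp only [Function.iterate_zero_apply]
      rw [h1, T.invFun_toFun (T.iter_toFun_maps _ (T.lep_mem_Iab β))]
      exact hmemF (P-1) β (by omega)
    | succ k =>
      rw [Function.iterate_succ_apply',
        T.invFun_toFun (T.iter_toFun_maps _ (T.lep_mem_Iab β))]
      exact hmemF k β (by omega)
  have hFinvIter : ∀ (j : ℕ), ∀ f ∈ F, T.invFun^[j] f ∈ F := by
    intro j
    induction j with
    | zero => intro f hf; simpa
    | succ j ih =>
      intro f hf
      rw [Function.iterate_succ_apply']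
      exact hFinv _ (ih f hf)
  have key : ∀ (k : ℕ) (u x : ℝ), u ∈ F → x ∈ Set.Ico T.a T.b → u ≤ x →
      (∀ f ∈ F, f ≤ x → f ≤ u) → T.toFun^[k] x = T.toFun^[k] u + (x - u) := by
    intro k
    induction k with
    | zero => intro u x _ _ _ _; simp
    | succ k ih =>
      intro u x hu hx hux hgap
      have huIab : u ∈ Set.Ico T.a T.b := hFsub u hu
      have hy : T.toFun^[k] u ∈ Set.Ico T.a T.b := T.iter_toFun_maps k huIab
      obtain ⟨α, hyα0⟩ := T.glep_cover T.perm0 hy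
      have hyα : T.toFun^[k] u ∈ T.interval α := hyα0
      have hyα1 : T.lep α ≤ T.toFun^[k] u := (T.mem_interval_iff.mp hyα).1
      have hyα2 : T.toFun^[k] u < T.lep α + T.len α := (T.mem_interval_iff.mp hyα).2
      have hz : T.toFun^[k] x = T.toFun^[k] u + (x - u) := ih u x hu hx hux hgap
      have hzIab : T.toFun^[k] x ∈ Set.Ico T.a T.b := T.iter_toFun_maps k hx
      have hzα : T.toFun^[k] x ∈ T.interval α := by
        rw [T.mem_interval_iff]
        constructor
        · rw [hz]; linarith
        · by_contra hcon
          push_neg at hcon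
          have hrb : T.lep α + T.len α < T.b := lt_of_le_of_lt hcon hzIab.2
          obtain ⟨α', hα'⟩ := T.exists_lep_next hrb
          have hrF : T.lep α + T.len α ∈ F := by rw [← hα']; exact hlepF α'
          rcases eq_or_lt_of_le hcon with heq | hlt
          · have hxF : x ∈ F := by
              have h9 : T.invFun^[k] (T.toFun^[k] x) = x := T.invFun_iter_toFun k hx
              rw [← h9, ← heq]
              exact hFinvIter k _ hrF
            have hxu : x = u := le_antisymm (hgap x hxF le_rfl) hux
            have h7 : T.toFun^[k] x = T.toFun^[k] u := by rw [hxu]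
            rw [h7] at heq
            linarith
          · set x' := u + (T.lep α + T.len α - T.toFun^[k] u) with hx'
            have hux' : u < x' := by rw [hx']; linarith
            have hx'x : x' < x := by rw [hx']; linarith
            have hx'Iab : x' ∈ Set.Ico T.a T.b :=
              ⟨le_trans huIab.1 (le_of_lt hux'), lt_trans hx'x hx.2⟩
            have hgap' : ∀ f ∈ F, f ≤ x' → f ≤ u := fun f hf hfx' =>
              hgap f hf (le_trans hfx' (le_of_lt hx'x))
            have h8 : T.toFun^[k] x' = T.lep α + T.len α := by
              rw [ih u x' hu hx'Iab (le_of_lt hux') hgap', hx']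
              ring
            have hx'F : x' ∈ F := by
              have h9 : T.invFun^[k] (T.toFun^[k] x') = x' :=
                T.invFun_iter_toFun k hx'Iab
              rw [← h9, h8]
              exact hFinvIter k _ hrF
            have := hgap x' hx'F (le_of_lt hx'x)
            linarith
      rw [Function.iterate_succ_apply', Function.iterate_succ_apply',
        T.toFun_of_mem hzα, T.toFun_of_mem hyα, hz]
      ring
  have main : ∀ x ∈ Set.Ico T.a T.b, T.toFun^[P] x = x := by
    intro x hx
    set s : Finset ℝ := F.filter (fun f => f ≤ x) with hs
    have hsne : s.Nonempty := ⟨T.a, by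
      rw [hs, Finset.mem_filter]
      exact ⟨haF, hx.1⟩⟩
    set u := s.max' hsne with hu
    have hus : u ∈ s := s.max'_mem hsne
    have huF : u ∈ F := (Finset.mem_filter.mp hus).1
    have hux : u ≤ x := (Finset.mem_filter.mp hus).2
    have hgap : ∀ f ∈ F, f ≤ x → f ≤ u := fun f hf hfx =>
      s.le_max' f (Finset.mem_filter.mpr ⟨hf, hfx⟩)
    have hkey := key P u x huF hx hux hgap
    rw [hFfix u huF] at hkey
    rw [hkey]
    ring
  constructor
  · intro x hx
    exact ⟨P, hP1, main x hx⟩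
  · refine ⟨1, fun _ => T.a, fun _ => T.b, fun _ => P, fun _ => T.hab, ?_, ?_,
      fun _ => hP1, fun _ x hx => main x hx⟩
    · intro i j hij
      exact absurd (Subsingleton.elim i j) hij
    · exact Set.iUnion_const _
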